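/- Suppose q ∈ K is nonzero and not equal to 1, and σ is a K-algebra automorphism of the quantum Weyl algebra A = K⟨x,y⟩/(xy - q·yx - 1) such that σ(x) = α₁·x + β₁ and σ(y) = α₂·y + β₂ for scalars α₁, α₂, β₁, β₂ ∈ K with α₁, α₂ nonzero. Then β₁ = 0, β₂ = 0, and α₂ = α₁⁻¹. -/
import Mathlib


noncomputable section

/-- The defining relation `x * y = q • (y * x) + 1` of the quantum Weyl algebra. -/
inductive WeylRel (K : Type*) [Field K] (q : K) :
    FreeAlgebra K (Fin 2) → FreeAlgebra K (Fin 2) → Prop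
  | rel : WeylRel K q (FreeAlgebra.ι K 0 * FreeAlgebra.ι K 1)
      (q • (FreeAlgebra.ι K 1 * FreeAlgebra.ι K 0) + 1)

/-- The quantum Weyl algebra `K⟨x,y⟩/(xy - q·yx - 1)`. -/
abbrev WeylAlg (K : Type*) [Field K] (q : K) := RingQuot (WeylRel K q)

namespace Stmt5Aux

variable {K : Type*} [Field K]

/-- q-integers. -/
def qn (q : K) : ℕ → K
  | 0 => 0
  | n + 1 => q * qn q n + 1

/-- The q-derivative operator on polynomials. -/
def Dop (q : K) : Module.End K (Polynomial K) :=
  (Polynomial.basisMonomials K).constr K fun n => qn q n • Polynomial.monomial (n - 1) 1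

/-- Multiplication-by-X operator on polynomials. -/
def Yop (K : Type*) [Field K] : Module.End K (Polynomial K) :=
  (Polynomial.basisMonomials K).constr K fun n => Polynomial.monomial (n + 1) 1

lemma Dop_monomial (q : K) (n : ℕ) :
    Dop q (Polynomial.monomial n 1) = qn q n • Polynomial.monomial (n - 1) 1 := by
  have := (Polynomial.basisMonomials K).constr_basis K
    (fun n => qn q n • Polynomial.monomial (n - 1) (1 : K)) n
  simpa [Dop, Polynomial.coe_basisMonomials] using this

lemma Yop_monomial (n : ℕ) :
    Yop K (Polynomial.monomial n (1 : K)) = Polynomial.monomial (n + 1) 1 := by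
  have := (Polynomial.basisMonomials K).constr_basis K
    (fun n => Polynomial.monomial (n + 1) (1 : K)) n
  simpa [Yop, Polynomial.coe_basisMonomials] using this

lemma rel_holds (q : K) :
    Dop q * Yop K = q • (Yop K * Dop q) + 1 := by
  apply (Polynomial.basisMonomials K).ext
  intro n
  simp only [Polynomial.coe_basisMonomials, Module.End.mul_apply, LinearMap.add_apply,
    LinearMap.smul_apply, Module.End.one_apply, Dop_monomial, Yop_monomial, map_smul]
  cases n with
  | zero =>
    simp [qn, Dop_monomial, Yop_monomial]
  | succ n =>
    simp only [Nat.add_sub_cancel, Dop_monomial, Yop_monomial, Nat.succ_sub_one]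
    rw [smul_smul, show qn q (n + 1 + 1) = q * qn q (n + 1) + 1 from rfl]
    rw [add_smul, one_smul]

/-- The representation of the quantum Weyl algebra on polynomials. -/
def rep (q : K) : WeylAlg K q →ₐ[K] Module.End K (Polynomial K) :=
  RingQuot.liftAlgHom K
    ⟨FreeAlgebra.lift K ![Dop q, Yop K], by
      rintro _ _ ⟨⟩
      simp [FreeAlgebra.lift_ι_apply, rel_holds q]⟩

lemma rep_x (q : K) :
    rep q (RingQuot.mkAlgHom K (WeylRel K q) (FreeAlgebra.ι K 0)) = Dop q := by
  simp [rep, RingQuot.liftAlgHom_mkAlgHom_apply, FreeAlgebra.lift_ι_apply]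

lemma rep_y (q : K) :
    rep q (RingQuot.mkAlgHom K (WeylRel K q) (FreeAlgebra.ι K 1)) = Yop K := by
  simp [rep, RingQuot.liftAlgHom_mkAlgHom_apply, FreeAlgebra.lift_ι_apply]

end Stmt5Aux

/-- If `σ` is a `K`-algebra automorphism of the quantum Weyl algebra with
`σ(x) = α₁ x + β₁` and `σ(y) = α₂ y + β₂` (with `α₁, α₂ ≠ 0`, and `q ≠ 0, 1`),
then `β₁ = 0`, `β₂ = 0`, and `α₂ = α₁⁻¹`. -/
theorem stmt_5 (K : Type*) [Field K] (q : K) (hq : q ≠ 0) (hq1 : q ≠ 1)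
    (α₁ α₂ β₁ β₂ : K) (hα₁ : α₁ ≠ 0) (hα₂ : α₂ ≠ 0)
    (σ : WeylAlg K q ≃ₐ[K] WeylAlg K q)
    (hx : σ (RingQuot.mkAlgHom K (WeylRel K q) (FreeAlgebra.ι K 0)) =
      α₁ • RingQuot.mkAlgHom K (WeylRel K q) (FreeAlgebra.ι K 0) +
        algebraMap K (WeylAlg K q) β₁)
    (hy : σ (RingQuot.mkAlgHom K (WeylRel K q) (FreeAlgebra.ι K 1)) =
      α₂ • RingQuot.mkAlgHom K (WeylRel K q) (FreeAlgebra.ι K 1) +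
        algebraMap K (WeylAlg K q) β₂) :
    β₁ = 0 ∧ β₂ = 0 ∧ α₂ = α₁⁻¹ := by
  classical
  open Stmt5Aux in
  -- images of x and y under rep ∘ σ
  set D := Dop q with hD
  set Y := Yop K with hY
  set A : Module.End K (Polynomial K) := α₁ • D + β₁ • 1 with hA
  set B : Module.End K (Polynomial K) := α₂ • Y + β₂ • 1 with hB
  have hrepx : (rep q) (σ (RingQuot.mkAlgHom K (WeylRel K q) (FreeAlgebra.ι K 0))) = A := by
    rw [hx, map_add, map_smul, rep_x, Algebra.algebraMap_eq_smul_one, map_smul, map_one]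
  have hrepy : (rep q) (σ (RingQuot.mkAlgHom K (WeylRel K q) (FreeAlgebra.ι K 1))) = B := by
    rw [hy, map_add, map_smul, rep_y, Algebra.algebraMap_eq_smul_one, map_smul, map_one]
  -- the relation transported through σ and rep
  have hrel : RingQuot.mkAlgHom K (WeylRel K q)
      (FreeAlgebra.ι K 0 * FreeAlgebra.ι K 1) =
      RingQuot.mkAlgHom K (WeylRel K q)
        (q • (FreeAlgebra.ι K 1 * FreeAlgebra.ι K 0) + 1) :=
    RingQuot.mkAlgHom_rel K (WeylRel.rel)
  have hE : A * B = q • (B * A) + 1 := by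
    have := congrArg (fun z => (rep q) (σ z)) hrel
    simpa [map_mul, map_add, map_smul, map_one, hrepx, hrepy] using this
  -- evaluate at monomials
  have key : ∀ n : ℕ, (A * B) (Polynomial.monomial n 1) =
      (q • (B * A) + (1 : Module.End K (Polynomial K))) (Polynomial.monomial n 1) := by
    intro n; rw [hE]
  have e0 := key 0
  have e1 := key 1
  simp only [Module.End.mul_apply, LinearMap.add_apply, LinearMap.smul_apply,
    Module.End.one_apply, hA, hB, map_add, map_smul, hD, hY,
    Dop_monomial, Yop_monomial] at e0 e1
  -- simplify qn values
  have q0 : qn q 0 = 0 := rfl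
  have q1 : qn q 1 = 1 := by simp [qn]
  have q2 : qn q 2 = q * 1 + 1 := by simp [qn]
  simp only [q0, q1, q2, zero_smul, smul_zero, one_smul, add_zero, zero_add,
    smul_add, smul_smul] at e0 e1
  norm_num at e0 e1
  -- extract coefficients
  have c01 := congrArg (fun p => Polynomial.coeff p 1) e0
  have c00 := congrArg (fun p => Polynomial.coeff p 0) e0
  have c10 := congrArg (fun p => Polynomial.coeff p 0) e1
  simp only [Polynomial.coeff_add, Polynomial.coeff_smul, Polynomial.coeff_monomial,
    smul_eq_mul] at c01 c00 c10
  norm_num at c01 c00 c10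
  simp only [Polynomial.coeff_one] at c01
  norm_num at c01
  have hb1 : β₁ = 0 := by
    have h : β₁ * (α₂ * (1 - q)) = 0 := by linear_combination c01
    rcases mul_eq_zero.mp h with h' | h'
    · exact h'
    · rcases mul_eq_zero.mp h' with h'' | h''
      · exact absurd h'' hα₂
      · exact absurd (sub_eq_zero.mp h'').symm hq1
  have hb2 : β₂ = 0 := by
    have h : β₂ * (α₁ * (1 - q)) = 0 := by linear_combination c10
    rcases mul_eq_zero.mp h with h' | h'
    · exact h'
    · rcases mul_eq_zero.mp h' with h'' | h''
      · exact absurd h'' hα₁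
      · exact absurd (sub_eq_zero.mp h'').symm hq1
  refine ⟨hb1, hb2, ?_⟩
  rw [hb1, hb2] at c00
  simp only [mul_zero, zero_mul, add_zero, zero_add] at c00
  exact eq_inv_of_mul_eq_one_left c00
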